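/- arXiv:2103.03218 — 4 statements merged into one kernel-verified Lean document; each statement's English description precedes it below -/
import Mathlib

section
/- Fix t_1 < 1/2 and suppose the event {Q_− < Q̄_−} holds, so that Q_+ = max{Q_i^{(0)} : Q_i^{(0)} < Q̄_−} is well defined. Then the Higher Criticism statistics computed from the two coupled P-value samples satisfy the deterministic inequality HC_n^{(1)} − HC_n^{(0)} ≤ sup_{t ∈ [Q_+, t_1]} √n·Δ_n(t)·w(t), where w(t) = 1/√(t(1−t)) and Δ_n(t) = F_n^{(1)}(t) − F_n^{(0)}(t). -/
open Filter

noncomputable section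

/-- The empirical CDF of the sample `Q 0, …, Q (n-1)`. -/
def ecdf {n : ℕ} (Q : Fin n → ℝ) (t : ℝ) : ℝ :=
  (∑ i, if Q i ≤ t then (1 : ℝ) else 0) / n

/-- The Higher Criticism statistic computed as the maximum of
`√n (F_n(t) − t)/√(t(1−t))` over the jump points `t ∈ {Q_i}` with `t ≤ t1`. -/
def HCjump {n : ℕ} (Q : Fin n → ℝ) (t1 : ℝ) : ℝ :=
  sSup {y : ℝ | ∃ i : Fin n, Q i ≤ t1 ∧
    y = Real.sqrt n * (ecdf Q (Q i) - Q i) / Real.sqrt (Q i * (1 - Q i))}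

/-- Monotonicity of `x ↦ (c - x)/√(x(1-x))`: it is decreasing on `(0, 1/2]` when `c ≥ 0`. -/
lemma sqrt_key {c s t : ℝ} (hc : 0 ≤ c) (hs : 0 < s) (hst : s ≤ t) (hsum : s + t ≤ 1) :
    (c - t) / Real.sqrt (t * (1 - t)) ≤ (c - s) / Real.sqrt (s * (1 - s)) := by
  have ht0 : 0 < t := lt_of_lt_of_le hs hst
  have hgs : 0 < s * (1 - s) := mul_pos hs (by linarith)
  have hgt : 0 < t * (1 - t) := mul_pos ht0 (by linarith)
  have hg : s * (1 - s) ≤ t * (1 - t) := by nlinarith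
  have ha : 0 < Real.sqrt (s * (1 - s)) := Real.sqrt_pos.2 hgs
  have hb : 0 < Real.sqrt (t * (1 - t)) := Real.sqrt_pos.2 hgt
  have hab : Real.sqrt (s * (1 - s)) ≤ Real.sqrt (t * (1 - t)) := Real.sqrt_le_sqrt hg
  have hts : s * Real.sqrt (t * (1 - t)) ≤ t * Real.sqrt (s * (1 - s)) := by
    have h1 : s * Real.sqrt (t * (1 - t)) = Real.sqrt (s ^ 2 * (t * (1 - t))) := by
      rw [Real.sqrt_mul (sq_nonneg s), Real.sqrt_sq hs.le]
    have h2 : t * Real.sqrt (s * (1 - s)) = Real.sqrt (t ^ 2 * (s * (1 - s))) := by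
      rw [Real.sqrt_mul (sq_nonneg t), Real.sqrt_sq ht0.le]
    rw [h1, h2]
    apply Real.sqrt_le_sqrt
    nlinarith [mul_nonneg (mul_nonneg hs.le ht0.le) (sub_nonneg.2 hst)]
  rw [div_le_div_iff₀ hb ha]
  nlinarith [mul_nonneg hc (sub_nonneg.2 hab)]

/-- for coupled samples agreeing off `I`, on the event `Q_− < Q̄_−`, the
HC statistics satisfy
`HC^{(1)} − HC^{(0)} ≤ sup_{t ∈ [Q_+, t1]} √n Δ_n(t) w(t)` with `w(t) = 1/√(t(1−t))`
and `Δ_n = F_n^{(1)} − F_n^{(0)}`. -/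
theorem hc_difference_dominated_by_delta (n : ℕ) (t1 : ℝ)
    (ht1 : 0 < t1) (ht1' : t1 < 1/2)
    (Q0 Q1 : Fin n → ℝ) (I : Finset (Fin n))
    (hagree : ∀ i ∉ I, Q1 i = Q0 i)
    (hQ0mem : ∀ i, Q0 i ∈ Set.Ioo (0 : ℝ) 1)
    (hQ1mem : ∀ i, Q1 i ∈ Set.Ioo (0 : ℝ) 1)
    (QbarM QM Qp : ℝ)
    (hQbarM : QbarM = sInf {x : ℝ | ∃ i ∈ I, x = Q0 i ∨ x = Q1 i})
    (hQM : QM = sInf {x : ℝ | ∃ i : Fin n, x = Q0 i ∨ x = Q1 i})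
    (hlt : QM < QbarM)
    (hQp : Qp = sSup {x : ℝ | ∃ i : Fin n, x = Q0 i ∧ x < QbarM}) :
    HCjump Q1 t1 - HCjump Q0 t1 ≤
      sSup {y : ℝ | ∃ t : ℝ, Qp ≤ t ∧ t ≤ t1 ∧
        y = Real.sqrt n * (ecdf Q1 t - ecdf Q0 t) / Real.sqrt (t * (1 - t))} := by
  classical
  -- dispatch n = 0
  rcases Nat.eq_zero_or_pos n with hn | hn
  · exfalso
    subst hn
    have h2 : {x : ℝ | ∃ i : Fin 0, x = Q0 i ∨ x = Q1 i} = ∅ := by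
      ext x
      simp only [Set.mem_setOf_eq, Set.mem_empty_iff_false, iff_false]
      rintro ⟨i, -⟩; exact i.elim0
    have h1 : {x : ℝ | ∃ i ∈ I, x = Q0 i ∨ x = Q1 i} = ∅ := by
      ext x
      simp only [Set.mem_setOf_eq, Set.mem_empty_iff_false, iff_false]
      rintro ⟨i, -, -⟩; exact i.elim0
    rw [h1, Real.sInf_empty] at hQbarM
    rw [h2, Real.sInf_empty] at hQM
    rw [hQbarM, hQM] at hlt
    exact lt_irrefl 0 hlt
  have hnR : (0:ℝ) < n := by exact_mod_cast hn
  -- basic ecdf bounds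
  have hEnn : ∀ (Q : Fin n → ℝ) (t : ℝ), 0 ≤ ecdf Q t := by
    intro Q t
    apply div_nonneg _ (Nat.cast_nonneg n)
    apply Finset.sum_nonneg
    intro i _
    split <;> norm_num
  have hEle : ∀ (Q : Fin n → ℝ) (t : ℝ), ecdf Q t ≤ 1 := by
    intro Q t
    rw [ecdf, div_le_one hnR]
    calc (∑ i, if Q i ≤ t then (1:ℝ) else 0) ≤ ∑ _i : Fin n, (1:ℝ) := by
          apply Finset.sum_le_sum; intro i _; split <;> norm_num
      _ = n := by simp
  -- facts about QM
  have hfinV : {x : ℝ | ∃ i : Fin n, x = Q0 i ∨ x = Q1 i}.Finite := by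
    apply Set.Finite.subset ((Set.finite_range Q0).union (Set.finite_range Q1))
    rintro x ⟨i, hx | hx⟩
    · exact Or.inl ⟨i, hx.symm⟩
    · exact Or.inr ⟨i, hx.symm⟩
  have hneV : {x : ℝ | ∃ i : Fin n, x = Q0 i ∨ x = Q1 i}.Nonempty :=
    ⟨Q0 ⟨0, hn⟩, ⟨0, hn⟩, Or.inl rfl⟩
  have hQMmem : ∃ i : Fin n, QM = Q0 i ∨ QM = Q1 i := by
    rw [hQM]; exact hneV.csInf_mem hfinV
  have hQMle0 : ∀ i, QM ≤ Q0 i := fun i => by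
    rw [hQM]; exact csInf_le hfinV.bddBelow ⟨i, Or.inl rfl⟩
  have hQMle1 : ∀ i, QM ≤ Q1 i := fun i => by
    rw [hQM]; exact csInf_le hfinV.bddBelow ⟨i, Or.inr rfl⟩
  -- facts about QbarM
  have hfinU : {x : ℝ | ∃ i ∈ I, x = Q0 i ∨ x = Q1 i}.Finite := by
    apply Set.Finite.subset ((Set.finite_range Q0).union (Set.finite_range Q1))
    rintro x ⟨i, -, hx | hx⟩
    · exact Or.inl ⟨i, hx.symm⟩
    · exact Or.inr ⟨i, hx.symm⟩
  have hQbar0 : ∀ i ∈ I, QbarM ≤ Q0 i := fun i hi => by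
    rw [hQbarM]; exact csInf_le hfinU.bddBelow ⟨i, hi, Or.inl rfl⟩
  have hQbar1 : ∀ i ∈ I, QbarM ≤ Q1 i := fun i hi => by
    rw [hQbarM]; exact csInf_le hfinU.bddBelow ⟨i, hi, Or.inr rfl⟩
  -- the minimizing index is outside I
  obtain ⟨i0, hi0⟩ := hQMmem
  have hi0I : i0 ∉ I := by
    intro hmem
    rcases hi0 with h | h
    · have := hQbar0 i0 hmem; rw [← h] at this; linarith
    · have := hQbar1 i0 hmem; rw [← h] at this; linarith
  have hQ0i0 : Q0 i0 = QM := by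
    rcases hi0 with h | h
    · exact h.symm
    · rw [hagree i0 hi0I] at h; exact h.symm
  have hQ1i0 : Q1 i0 = QM := by rw [hagree i0 hi0I, hQ0i0]
  -- facts about Qp
  have hfinW : {x : ℝ | ∃ i : Fin n, x = Q0 i ∧ x < QbarM}.Finite := by
    apply Set.Finite.subset (Set.finite_range Q0)
    rintro x ⟨i, hx, -⟩
    exact ⟨i, hx.symm⟩
  have hneW : {x : ℝ | ∃ i : Fin n, x = Q0 i ∧ x < QbarM}.Nonempty :=
    ⟨QM, i0, hQ0i0.symm, hlt⟩
  have hQpmem : ∃ i : Fin n, Qp = Q0 i ∧ Qp < QbarM := by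
    rw [hQp]; exact hneW.csSup_mem hfinW
  obtain ⟨ip, hQpip, hQpbar⟩ := hQpmem
  have hQp_pos : 0 < Qp := by rw [hQpip]; exact (hQ0mem ip).1
  have hQp_lt1 : Qp < 1 := by rw [hQpip]; exact (hQ0mem ip).2
  -- the two ecdfs agree below QbarM
  have hE01 : ∀ t : ℝ, t < QbarM → ecdf Q1 t = ecdf Q0 t := by
    intro t ht
    rw [ecdf, ecdf]
    congr 1
    apply Finset.sum_congr rfl
    intro i _
    by_cases hiI : i ∈ I
    · have h0 : ¬ Q0 i ≤ t := not_le.2 (lt_of_lt_of_le ht (hQbar0 i hiI))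
      have h1 : ¬ Q1 i ≤ t := not_le.2 (lt_of_lt_of_le ht (hQbar1 i hiI))
      rw [if_neg h1, if_neg h0]
    · rw [hagree i hiI]
  -- boundedness of the HC sets
  have hbdd0 : BddAbove {y : ℝ | ∃ i : Fin n, Q0 i ≤ t1 ∧
      y = Real.sqrt n * (ecdf Q0 (Q0 i) - Q0 i) / Real.sqrt (Q0 i * (1 - Q0 i))} := by
    apply BddAbove.mono _
      (Set.finite_range (fun i : Fin n =>
        Real.sqrt n * (ecdf Q0 (Q0 i) - Q0 i) / Real.sqrt (Q0 i * (1 - Q0 i)))).bddAbove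
    rintro y ⟨i, -, rfl⟩
    exact ⟨i, rfl⟩
  -- jump points of sample 1 below QbarM belong to the sample-0 HC set
  have hjump_low : ∀ i : Fin n, Q1 i ≤ t1 → Q1 i < QbarM →
      Real.sqrt n * (ecdf Q1 (Q1 i) - Q1 i) / Real.sqrt (Q1 i * (1 - Q1 i)) ∈
      {y : ℝ | ∃ j : Fin n, Q0 j ≤ t1 ∧
        y = Real.sqrt n * (ecdf Q0 (Q0 j) - Q0 j) / Real.sqrt (Q0 j * (1 - Q0 j))} := by
    intro i ht1i hlow
    have hiI : i ∉ I := fun hmem => absurd hlow (not_lt.2 (hQbar1 i hmem))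
    have heq : Q1 i = Q0 i := hagree i hiI
    refine ⟨i, by rw [← heq]; exact ht1i, ?_⟩
    rw [← heq, ← hE01 (Q1 i) hlow]
  -- nonemptiness transfer
  have hexiff : (∃ i, Q1 i ≤ t1) ↔ (∃ i, Q0 i ≤ t1) := by
    constructor
    · rintro ⟨i, hi⟩; exact ⟨i0, by rw [hQ0i0]; exact le_trans (hQMle1 i) hi⟩
    · rintro ⟨i, hi⟩; exact ⟨i0, by rw [hQ1i0]; exact le_trans (hQMle0 i) hi⟩
  simp only [HCjump]
  set S0 : Set ℝ := {y : ℝ | ∃ i : Fin n, Q0 i ≤ t1 ∧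
      y = Real.sqrt n * (ecdf Q0 (Q0 i) - Q0 i) / Real.sqrt (Q0 i * (1 - Q0 i))} with hS0def
  set S1 : Set ℝ := {y : ℝ | ∃ i : Fin n, Q1 i ≤ t1 ∧
      y = Real.sqrt n * (ecdf Q1 (Q1 i) - Q1 i) / Real.sqrt (Q1 i * (1 - Q1 i))} with hS1def
  set T : Set ℝ := {y : ℝ | ∃ t : ℝ, Qp ≤ t ∧ t ≤ t1 ∧
      y = Real.sqrt n * (ecdf Q1 t - ecdf Q0 t) / Real.sqrt (t * (1 - t))} with hTdef
  by_cases hQpt1 : Qp ≤ t1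
  · -- Case A : Qp ≤ t1, so 0 ∈ T
    have hT0 : (0:ℝ) ∈ T := by
      refine ⟨Qp, le_refl _, hQpt1, ?_⟩
      rw [hE01 Qp hQpbar, sub_self, mul_zero, zero_div]
    have hTbdd : BddAbove T := by
      refine ⟨Real.sqrt n / Real.sqrt (Qp * (1 - Qp)), ?_⟩
      rintro y ⟨t, hQpt, htt1, rfl⟩
      have hgp : 0 < Qp * (1 - Qp) := mul_pos hQp_pos (by linarith)
      have hgt : Qp * (1 - Qp) ≤ t * (1 - t) := by nlinarith
      have hdp : 0 < Real.sqrt (Qp * (1 - Qp)) := Real.sqrt_pos.2 hgp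
      have hdle : Real.sqrt (Qp * (1 - Qp)) ≤ Real.sqrt (t * (1 - t)) :=
        Real.sqrt_le_sqrt hgt
      have hnum : Real.sqrt n * (ecdf Q1 t - ecdf Q0 t) ≤ Real.sqrt n := by
        have h1 : ecdf Q1 t - ecdf Q0 t ≤ 1 := by
          have := hEle Q1 t; have := hEnn Q0 t; linarith
        calc Real.sqrt n * (ecdf Q1 t - ecdf Q0 t) ≤ Real.sqrt n * 1 :=
              mul_le_mul_of_nonneg_left h1 (Real.sqrt_nonneg _)
          _ = Real.sqrt n := mul_one _
      exact div_le_div₀ (Real.sqrt_nonneg _) hnum hdp hdle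
    have hTpos : (0:ℝ) ≤ sSup T := le_csSup hTbdd hT0
    by_cases hex : ∃ i, Q1 i ≤ t1
    · obtain ⟨iw, hiw⟩ := hex
      have hmain : sSup S1 ≤ sSup S0 + sSup T := by
        refine csSup_le ⟨_, ⟨iw, hiw, rfl⟩⟩ ?_
        rintro y ⟨i, hit1, rfl⟩
        by_cases hlow : Q1 i < QbarM
        · have := le_csSup hbdd0 (hjump_low i hit1 hlow)
          linarith
        · push_neg at hlow
          set t := Q1 i with htdef
          have ht_pos : 0 < t := (hQ1mem i).1
          -- the largest sample-0 point below t
          have hfinWt : {x : ℝ | ∃ j : Fin n, x = Q0 j ∧ x ≤ t}.Finite := by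
            apply Set.Finite.subset (Set.finite_range Q0)
            rintro x ⟨j, hx, -⟩
            exact ⟨j, hx.symm⟩
          have hneWt : {x : ℝ | ∃ j : Fin n, x = Q0 j ∧ x ≤ t}.Nonempty :=
            ⟨QM, i0, hQ0i0.symm, le_trans hlt.le hlow⟩
          obtain ⟨j0, hsj0, hst⟩ :
              ∃ j : Fin n, sSup {x : ℝ | ∃ j : Fin n, x = Q0 j ∧ x ≤ t} = Q0 j ∧
                sSup {x : ℝ | ∃ j : Fin n, x = Q0 j ∧ x ≤ t} ≤ t :=
            hneWt.csSup_mem hfinWt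
          set s := sSup {x : ℝ | ∃ j : Fin n, x = Q0 j ∧ x ≤ t} with hsdef
          have hsmax : ∀ j : Fin n, Q0 j ≤ t → Q0 j ≤ s := fun j hj =>
            le_csSup hfinWt.bddAbove ⟨j, rfl, hj⟩
          have hE00 : ecdf Q0 t = ecdf Q0 s := by
            rw [ecdf, ecdf]
            congr 1
            apply Finset.sum_congr rfl
            intro j _
            by_cases hj : Q0 j ≤ t
            · rw [if_pos hj, if_pos (hsmax j hj)]
            · rw [if_neg hj, if_neg (fun h => hj (le_trans h hst))]
          have hs_pos : 0 < s := by rw [hsj0]; exact (hQ0mem j0).1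
          have hkey := sqrt_key (hEnn Q0 s) hs_pos hst (by linarith : s + t ≤ 1)
          have hkey' : Real.sqrt n * (ecdf Q0 s - t) / Real.sqrt (t * (1 - t)) ≤
              Real.sqrt n * (ecdf Q0 s - s) / Real.sqrt (s * (1 - s)) := by
            rw [mul_div_assoc, mul_div_assoc]
            exact mul_le_mul_of_nonneg_left hkey (Real.sqrt_nonneg _)
          have hmem0 : Real.sqrt n * (ecdf Q0 s - s) / Real.sqrt (s * (1 - s)) ∈ S0 := by
            refine ⟨j0, by rw [← hsj0]; exact le_trans hst hit1, ?_⟩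
            rw [← hsj0]
          have hmemT : Real.sqrt n * (ecdf Q1 t - ecdf Q0 t) / Real.sqrt (t * (1 - t)) ∈ T :=
            ⟨t, le_of_lt (lt_of_lt_of_le hQpbar hlow), hit1, rfl⟩
          have hsplit : Real.sqrt n * (ecdf Q1 t - t) / Real.sqrt (t * (1 - t)) =
              Real.sqrt n * (ecdf Q0 s - t) / Real.sqrt (t * (1 - t)) +
              Real.sqrt n * (ecdf Q1 t - ecdf Q0 t) / Real.sqrt (t * (1 - t)) := by
            rw [← hE00]; ring
          rw [hsplit]
          exact add_le_add (le_trans hkey' (le_csSup hbdd0 hmem0)) (le_csSup hTbdd hmemT)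
      linarith
    · -- both HC sets empty
      have hS1e : S1 = ∅ := by
        ext y
        simp only [hS1def, Set.mem_setOf_eq, Set.mem_empty_iff_false, iff_false]
        rintro ⟨i, h, -⟩; exact hex ⟨i, h⟩
      have hS0e : S0 = ∅ := by
        ext y
        simp only [hS0def, Set.mem_setOf_eq, Set.mem_empty_iff_false, iff_false]
        rintro ⟨i, h, -⟩; exact hex (hexiff.2 ⟨i, h⟩)
      rw [hS1e, hS0e, Real.sSup_empty]
      simpa using hTpos
  · -- Case B : t1 < Qp, so T is empty and all sample-1 jump points are below QbarM
    push_neg at hQpt1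
    have hTempty : T = ∅ := by
      ext y
      simp only [hTdef, Set.mem_setOf_eq, Set.mem_empty_iff_false, iff_false]
      rintro ⟨t, h1, h2, -⟩; linarith
    rw [hTempty, Real.sSup_empty]
    by_cases hex : ∃ i, Q1 i ≤ t1
    · obtain ⟨iw, hiw⟩ := hex
      have hmain : sSup S1 ≤ sSup S0 := by
        refine csSup_le ⟨_, ⟨iw, hiw, rfl⟩⟩ ?_
        rintro y ⟨i, hit1, rfl⟩
        exact le_csSup hbdd0 (hjump_low i hit1 (by linarith))
      linarith
    · have hS1e : S1 = ∅ := by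
        ext y
        simp only [hS1def, Set.mem_setOf_eq, Set.mem_empty_iff_false, iff_false]
        rintro ⟨i, h, -⟩; exact hex ⟨i, h⟩
      have hS0e : S0 = ∅ := by
        ext y
        simp only [hS0def, Set.mem_setOf_eq, Set.mem_empty_iff_false, iff_false]
        rintro ⟨i, h, -⟩; exact hex (hexiff.2 ⟨i, h⟩)
      rw [hS1e, hS0e, Real.sSup_empty]
      norm_num
end
end

section
/- Let X_1,…,X_n be independent random variables where each X_i has a continuous density f_{X_i} with ‖f_{X_i}‖_∞ ≤ C for all i, for some finite C > 0. Let X_{(1)} ≤ … ≤ X_{(n)} be the order statistics and T_i = X_{(i+1)} − X_{(i)} the spacings. Then for every η > 0 and every x > 0, Pr(n^{2+η}·min_i T_i > x) → 1 as n → ∞. -/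
open MeasureTheory ProbabilityTheory Filter

noncomputable section

/-- Order statistics of a finite sample: `orderStat X i` is the `(i+1)`-st smallest value. -/
def orderStat {n : ℕ} (X : Fin n → ℝ) (i : Fin n) : ℝ := X (Tuple.sort X i)

/-- The minimal spacing `min_i (X_(i+1) − X_(i))` between consecutive order statistics. -/
def minGap {n : ℕ} (X : Fin n → ℝ) : ℝ :=
  sInf {d : ℝ | ∃ j : Fin n, ∃ h : (j : ℕ) + 1 < n,
    d = orderStat X ⟨(j : ℕ) + 1, h⟩ - orderStat X j}

/-- If all pairwise distances exceed `ε`, then the minimal spacing exceeds `ε`. -/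
lemma lemA {n : ℕ} (hn : 2 ≤ n) (Y : Fin n → ℝ) (ε : ℝ)
    (h : ∀ i j : Fin n, i ≠ j → ε < |Y i - Y j|) : ε < minGap Y := by
  set S : Set ℝ := {d : ℝ | ∃ j : Fin n, ∃ h : (j : ℕ) + 1 < n,
    d = orderStat Y ⟨(j : ℕ) + 1, h⟩ - orderStat Y j} with hSdef
  have hSr : S = Set.range (fun p : {j : Fin n // (j : ℕ) + 1 < n} =>
      orderStat Y ⟨(p.1 : ℕ) + 1, p.2⟩ - orderStat Y p.1) := by
    ext d
    constructor
    · rintro ⟨j, hj, rfl⟩; exact ⟨⟨j, hj⟩, rfl⟩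
    · rintro ⟨⟨j, hj⟩, rfl⟩; exact ⟨j, hj, rfl⟩
  have hne : S.Nonempty := by
    refine ⟨_, ⟨⟨0, by omega⟩, ?_, rfl⟩⟩
    show 0 + 1 < n
    omega
  have hfin : S.Finite := by rw [hSr]; exact Set.finite_range _
  have hmem : sInf S ∈ S := hne.csInf_mem hfin
  obtain ⟨j, hj, heq⟩ := hmem
  have hgap : minGap Y = orderStat Y ⟨(j : ℕ) + 1, hj⟩ - orderStat Y j := heq
  set a : Fin n := Tuple.sort Y ⟨(j : ℕ) + 1, hj⟩
  set b : Fin n := Tuple.sort Y j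
  have hab : a ≠ b := by
    intro hEq
    have : (⟨(j : ℕ) + 1, hj⟩ : Fin n) = j := (Tuple.sort Y).injective hEq
    have := congrArg Fin.val this
    simp at this
  have hmono : orderStat Y j ≤ orderStat Y ⟨(j : ℕ) + 1, hj⟩ := by
    have := Tuple.monotone_sort Y (show j ≤ ⟨(j : ℕ) + 1, hj⟩ from Nat.le_succ _)
    exact this
  have habs : ε < |Y a - Y b| := h a b hab
  have hYab : Y a - Y b = minGap Y := by rw [hgap]; rfl
  rw [hYab] at habs
  have hnn : 0 ≤ minGap Y := by rw [hgap]; linarith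
  rwa [abs_of_nonneg hnn] at habs

/-- Pair probability bound. -/
lemma pair_bound {Ω : Type} [MeasurableSpace Ω] (P : Measure Ω) [IsProbabilityMeasure P]
    {Xi Xj : Ω → ℝ} (hXi : Measurable Xi) (hXj : Measurable Xj)
    (hind : IndepFun Xi Xj P)
    {fi fj : ℝ → ℝ} (hfj : Measurable fj)
    {C : ℝ} (hC0 : 0 ≤ C) (hfjC : ∀ y, fj y ≤ C)
    (hlawi : Measure.map Xi P = MeasureTheory.volume.withDensity fun y => ENNReal.ofReal (fi y))
    (hlawj : Measure.map Xj P = MeasureTheory.volume.withDensity fun y => ENNReal.ofReal (fj y))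
    {ε : ℝ} (hε : 0 ≤ ε) :
    P {ω | |Xi ω - Xj ω| ≤ ε} ≤ ENNReal.ofReal (2 * C * ε) := by
  have hs : MeasurableSet {p : ℝ × ℝ | |p.1 - p.2| ≤ ε} :=
    measurableSet_le (measurable_fst.sub measurable_snd).abs measurable_const
  have hmap : Measure.map (fun ω => (Xi ω, Xj ω)) P
      = (Measure.map Xi P).prod (Measure.map Xj P) :=
    (indepFun_iff_map_prod_eq_prod_map_map hXi.aemeasurable hXj.aemeasurable).mp hind
  haveI : IsProbabilityMeasure (Measure.map Xi P) := Measure.isProbabilityMeasure_map hXi.aemeasurable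
  have h1 : P {ω | |Xi ω - Xj ω| ≤ ε}
      = ((Measure.map Xi P).prod (Measure.map Xj P)) {p : ℝ × ℝ | |p.1 - p.2| ≤ ε} := by
    rw [← hmap, Measure.map_apply (hXi.prodMk hXj) hs]
    rfl
  have hinner : ∀ a : ℝ, (Measure.map Xj P) (Prod.mk a ⁻¹' {p : ℝ × ℝ | |p.1 - p.2| ≤ ε})
      ≤ ENNReal.ofReal C * ENNReal.ofReal (2 * ε) := by
    intro a
    have hset : Prod.mk a ⁻¹' {p : ℝ × ℝ | |p.1 - p.2| ≤ ε} = Set.Icc (a - ε) (a + ε) := by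
      ext b
      simp only [Set.mem_preimage, Set.mem_setOf_eq, Set.mem_Icc, abs_le]
      constructor <;> rintro ⟨h1, h2⟩ <;> constructor <;> linarith
    rw [hset, hlawj, withDensity_apply _ measurableSet_Icc]
    calc ∫⁻ b in Set.Icc (a - ε) (a + ε), ENNReal.ofReal (fj b)
        ≤ ∫⁻ _ in Set.Icc (a - ε) (a + ε), ENNReal.ofReal C :=
          lintegral_mono fun b => ENNReal.ofReal_le_ofReal (hfjC b)
      _ = ENNReal.ofReal C * MeasureTheory.volume (Set.Icc (a - ε) (a + ε)) :=
          setLIntegral_const _ _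
      _ = ENNReal.ofReal C * ENNReal.ofReal (2 * ε) := by
          rw [Real.volume_Icc]; congr 1; ring
  rw [h1, Measure.prod_apply hs]
  calc ∫⁻ a, (Measure.map Xj P) (Prod.mk a ⁻¹' {p : ℝ × ℝ | |p.1 - p.2| ≤ ε})
        ∂(Measure.map Xi P)
      ≤ ∫⁻ _, ENNReal.ofReal C * ENNReal.ofReal (2 * ε) ∂(Measure.map Xi P) :=
        lintegral_mono hinner
    _ = ENNReal.ofReal C * ENNReal.ofReal (2 * ε) := by
        rw [lintegral_const, measure_univ, mul_one]
    _ = ENNReal.ofReal (2 * C * ε) := by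
        rw [← ENNReal.ofReal_mul hC0]; congr 1; ring

/-- if `X_1,…,X_n` are independent with continuous densities bounded by a
common constant `C`, then for every `η > 0` and `x > 0`,
`Pr(n^{2+η}·min_i T_i > x) → 1` as `n → ∞`. -/
theorem min_gap_bounded_densities (C : ℝ) (hC : 0 < C)
    (Ω : ℕ → Type) [∀ n, MeasurableSpace (Ω n)]
    (P : (n : ℕ) → Measure (Ω n)) (hP : ∀ n, IsProbabilityMeasure (P n))
    (X : (n : ℕ) → Fin n → Ω n → ℝ)
    (f : (n : ℕ) → Fin n → ℝ → ℝ)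
    (hXmeas : ∀ n (i : Fin n), Measurable (X n i))
    (hindep : ∀ n, iIndepFun (X n) (P n))
    (hfcont : ∀ n (i : Fin n), Continuous (f n i))
    (hfpos : ∀ n (i : Fin n) (x : ℝ), 0 ≤ f n i x)
    (hfbdd : ∀ n (i : Fin n) (x : ℝ), f n i x ≤ C)
    (hlaw : ∀ n (i : Fin n),
      Measure.map (X n i) (P n) =
        MeasureTheory.volume.withDensity fun x => ENNReal.ofReal (f n i x))
    (η x : ℝ) (hη : 0 < η) (hx : 0 < x) :
    Tendsto (fun n : ℕ =>
        ((P n) {ω | (n : ℝ) ^ ((2 : ℝ) + η) * minGap (fun i => X n i ω) > x}).toReal)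
      atTop (nhds 1) := by
  have hlow : Tendsto (fun n : ℕ => 1 - 2 * C * x * (n : ℝ) ^ (-η)) atTop (nhds 1) := by
    have h0 : Tendsto (fun n : ℕ => (n : ℝ) ^ (-η)) atTop (nhds 0) :=
      (tendsto_rpow_neg_atTop hη).comp tendsto_natCast_atTop_atTop
    have h1 : Tendsto (fun n : ℕ => (1 : ℝ) - 2 * C * x * (n : ℝ) ^ (-η)) atTop
        (nhds (1 - 2 * C * x * 0)) := tendsto_const_nhds.sub (h0.const_mul (2 * C * x))
    simpa using h1
  refine tendsto_of_tendsto_of_tendsto_of_le_of_le' hlow tendsto_const_nhds ?_ ?_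
  · -- lower bound eventually
    filter_upwards [eventually_ge_atTop 2] with n hn
    haveI := hP n
    have hnpos : (0 : ℝ) < n := by
      have : (2 : ℝ) ≤ (n : ℝ) := by exact_mod_cast hn
      linarith
    have hpow : (0 : ℝ) < (n : ℝ) ^ ((2 : ℝ) + η) := Real.rpow_pos_of_pos hnpos _
    set ε : ℝ := x / (n : ℝ) ^ ((2 : ℝ) + η) with hεdef
    have hε : 0 < ε := div_pos hx hpow
    set F : Finset (Fin n × Fin n) := Finset.univ.filter (fun p => p.1 ≠ p.2) with hF
    set B : Set (Ω n) := ⋃ p ∈ F, {ω | |X n p.1 ω - X n p.2 ω| ≤ ε} with hB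
    have hBmeas : MeasurableSet B :=
      F.measurableSet_biUnion fun p _ =>
        measurableSet_le ((hXmeas n p.1).sub (hXmeas n p.2)).abs measurable_const
    set G : Set (Ω n) := {ω | (n : ℝ) ^ ((2 : ℝ) + η) * minGap (fun i => X n i ω) > x} with hG
    have hsub : Bᶜ ⊆ G := by
      intro ω hω
      have hall : ∀ i j : Fin n, i ≠ j → ε < |X n i ω - X n j ω| := by
        intro i j hij
        by_contra hle
        push_neg at hle
        have hmemF : (i, j) ∈ (F : Set (Fin n × Fin n)) := by
          simp [hF, hij]
        exact hω (Set.mem_biUnion hmemF hle)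
      have hgap : ε < minGap (fun i => X n i ω) := lemA hn _ ε hall
      have hxε : (n : ℝ) ^ ((2 : ℝ) + η) * ε = x := by
        rw [hεdef]; field_simp
      show x < (n : ℝ) ^ ((2 : ℝ) + η) * minGap (fun i => X n i ω)
      calc x = (n : ℝ) ^ ((2 : ℝ) + η) * ε := hxε.symm
        _ < _ := by exact (mul_lt_mul_iff_right₀ hpow).mpr hgap
    have hPB : (P n) B ≤ ENNReal.ofReal ((n : ℝ) * (n : ℝ) * (2 * C * ε)) := by
      calc (P n) B ≤ ∑ p ∈ F, (P n) {ω | |X n p.1 ω - X n p.2 ω| ≤ ε} :=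
            measure_biUnion_finset_le F _
        _ ≤ ∑ _p ∈ F, ENNReal.ofReal (2 * C * ε) := by
            refine Finset.sum_le_sum fun p hp => ?_
            have hij : p.1 ≠ p.2 := (Finset.mem_filter.mp hp).2
            exact pair_bound (P n) (hXmeas n p.1) (hXmeas n p.2)
              ((hindep n).indepFun hij) (hfcont n p.2).measurable hC.le
              (hfbdd n p.2) (hlaw n p.1) (hlaw n p.2) hε.le
        _ = (F.card : ENNReal) * ENNReal.ofReal (2 * C * ε) := by
            rw [Finset.sum_const, nsmul_eq_mul]
        _ ≤ ((n * n : ℕ) : ENNReal) * ENNReal.ofReal (2 * C * ε) := by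
            refine mul_le_mul_left ?_ _
            have : F.card ≤ (Finset.univ : Finset (Fin n × Fin n)).card :=
              Finset.card_le_card (Finset.filter_subset _ _)
            simp only [Finset.card_univ, Fintype.card_prod, Fintype.card_fin] at this
            exact_mod_cast this
        _ = ENNReal.ofReal ((n : ℝ) * (n : ℝ) * (2 * C * ε)) := by
            rw [← ENNReal.ofReal_natCast (n * n), ← ENNReal.ofReal_mul (by positivity)]
            congr 1
            push_cast
            ring
    have hPBr : ((P n) B).toReal ≤ 2 * C * x * (n : ℝ) ^ (-η) := by
      have hb : ((P n) B).toReal ≤ (n : ℝ) * (n : ℝ) * (2 * C * ε) :=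
        ENNReal.toReal_le_of_le_ofReal (by positivity) hPB
      have heq : (n : ℝ) * (n : ℝ) * (2 * C * ε) = 2 * C * x * (n : ℝ) ^ (-η) := by
        have h2 : (n : ℝ) * (n : ℝ) = (n : ℝ) ^ ((2 : ℝ)) := by
          rw [show ((2 : ℝ)) = ((2 : ℕ) : ℝ) by norm_num, Real.rpow_natCast]
          ring
        have hdiv : (n : ℝ) ^ ((2 : ℝ)) / (n : ℝ) ^ ((2 : ℝ) + η) = (n : ℝ) ^ (-η) := by
          rw [← Real.rpow_sub hnpos]
          congr 1
          ring
        rw [hεdef, h2, ← hdiv]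
        field_simp
      linarith [heq ▸ hb]
    have hmono : ((P n) Bᶜ).toReal ≤ ((P n) G).toReal :=
      ENNReal.toReal_mono (measure_ne_top _ _) (measure_mono hsub)
    have hcompl : ((P n) Bᶜ).toReal = 1 - ((P n) B).toReal := by
      rw [prob_compl_eq_one_sub hBmeas,
        ENNReal.toReal_sub_of_le prob_le_one ENNReal.one_ne_top, ENNReal.toReal_one]
    have : 1 - 2 * C * x * (n : ℝ) ^ (-η) ≤ ((P n) G).toReal := by
      rw [hcompl] at hmono
      linarith
    exact this
  · filter_upwards with n
    haveI := hP n
    calc ((P n) _).toReal ≤ (1 : ENNReal).toReal :=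
          ENNReal.toReal_mono ENNReal.one_ne_top prob_le_one
      _ = 1 := ENNReal.toReal_one
end
end

section
/- Let β ∈ (1/2,1). Under the coupling, for any η > 0 and a > 0 there exist c = c(β) > 0 and n0 such that for all n ≥ n0, uniformly in u ∈ [n^{η−1}, 1/2]: Pr( √n·(F̃^{(0)}(u) − E[F̃^{(0)}(u)]) > a·√(u(1−u)) ) ≤ exp(−a·c·n^{η/2}) + exp(−n^{1−(β+1/2)/2}). -/
open MeasureTheory ProbabilityTheory Filter

noncomputable section

/-- The uniform distribution on `(0,1)`. -/
def unif : Measure ℝ := MeasureTheory.volume.restrict (Set.Ioo 0 1)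

/-- The Bernoulli distribution on `ℝ` (mass `1−p` at `0`, mass `p` at `1`). -/
def bernoulliReal (p : ℝ) : Measure ℝ :=
  ENNReal.ofReal (1 - p) • Measure.dirac 0 + ENNReal.ofReal p • Measure.dirac 1

/-- The thinned null empirical CDF normalized by `n`:
`F̃^{(0)}(u) = (1/n) Σ_{i ∈ I} 1(Q_i^{(0)} ≤ u)`, where `I = {i : B_i = 1}`. -/
def Ftil0 {n : ℕ} {Ω : Type*} (B Q0 : Fin n → Ω → ℝ) (u : ℝ) (ω : Ω) : ℝ :=
  (∑ i, if B i ω = 1 ∧ Q0 i ω ≤ u then (1 : ℝ) else 0) / n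

set_option maxHeartbeats 1000000 in
/-- concentration of the thinned null empirical process. For
`β ∈ (1/2,1)`, `η > 0`, `a > 0` there are `c = c(β) > 0` and `n0` such that for all
`n ≥ n0` and all `u ∈ [n^{η−1}, 1/2]`,
`Pr(√n (F̃^{(0)}(u) − E F̃^{(0)}(u)) > a√(u(1−u))) ≤ e^{−acn^{η/2}} + e^{−n^{1−(β+1/2)/2}}`. -/
theorem null_thinned_ecdf_concentration (β η a : ℝ)
    (hβ : β ∈ Set.Ioo (1/2 : ℝ) 1) (hη : 0 < η) (ha : 0 < a) :
    ∃ c : ℝ, 0 < c ∧ ∃ n0 : ℕ, ∀ n : ℕ, n0 ≤ n →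
      ∀ (Ω : Type) (_ : MeasurableSpace Ω) (P : Measure Ω),
        IsProbabilityMeasure P →
        ∀ B Q0 : Fin n → Ω → ℝ,
          (∀ i, Measurable (B i)) → (∀ i, Measurable (Q0 i)) →
          (∀ i, Measure.map (B i) P = bernoulliReal ((n : ℝ) ^ (-β))) →
          (∀ i, Measure.map (Q0 i) P = unif) →
          iIndepFun
            (fun p : Fin n × Fin 2 => ![B p.1, Q0 p.1] p.2) P →
          ∀ u ∈ Set.Icc ((n : ℝ) ^ (η - 1)) (1/2 : ℝ),
            P {ω | Real.sqrt n * (Ftil0 B Q0 u ω - ∫ ω', Ftil0 B Q0 u ω' ∂P) >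
                a * Real.sqrt (u * (1 - u))} ≤
              ENNReal.ofReal (Real.exp (-(a * c * (n : ℝ) ^ (η / 2))) +
                Real.exp (-(n : ℝ) ^ (1 - (β + 1/2) / 2))) := by
  obtain ⟨hβ1, hβ2⟩ := hβ
  refine ⟨1/4, by norm_num, ?_⟩
  have hb2 : (0:ℝ) < β - 1/2 := by linarith
  have htend : Tendsto (fun n : ℕ => (n:ℝ) ^ (β - 1/2)) atTop atTop :=
    (tendsto_rpow_atTop hb2).comp tendsto_natCast_atTop_atTop
  obtain ⟨n0, hn0⟩ := eventually_atTop.mp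
    ((htend.eventually_ge_atTop (2 * Real.sqrt 2 * (Real.exp 1 - 2) / a)).and
      (eventually_ge_atTop 1))
  refine ⟨n0, ?_⟩
  intro n hn Ω mΩ P hP B Q0 hBm hQm hB hQ hindep u hu
  haveI := hP
  obtain ⟨hcond, hn1⟩ := hn0 n hn
  have hnR : (1:ℝ) ≤ (n:ℝ) := by exact_mod_cast hn1
  have hnpos : (0:ℝ) < n := by linarith
  obtain ⟨hul, huu⟩ := hu
  have hu0 : 0 < u := lt_of_lt_of_le (Real.rpow_pos_of_pos hnpos _) hul
  set p := (n:ℝ) ^ (-β) with hpdef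
  have hp0 : 0 ≤ p := (Real.rpow_pos_of_pos hnpos _).le
  set q := p * u with hqdef
  have hq0 : 0 ≤ q := mul_nonneg hp0 hu0.le
  -- the indicator sets and variables
  set A : Fin n → Set Ω := fun i => (B i)⁻¹' {1} ∩ (Q0 i)⁻¹' (Set.Iic u) with hA
  have hAmeas : ∀ i, MeasurableSet (A i) := fun i =>
    ((hBm i) (measurableSet_singleton 1)).inter ((hQm i) measurableSet_Iic)
  set X : Fin n → Ω → ℝ := fun i => (A i).indicator (fun _ => (1:ℝ)) with hX
  have hXmeas : ∀ i, Measurable (X i) := fun i =>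
    (measurable_const.indicator (hAmeas i))
  have hXint : ∀ i, Integrable (X i) P := fun i =>
    (integrable_const (1:ℝ)).indicator (hAmeas i)
  -- marginal probabilities
  have hPB : ∀ i, P ((B i)⁻¹' {1}) = ENNReal.ofReal p := by
    intro i
    rw [← Measure.map_apply (hBm i) (measurableSet_singleton 1), hB i]
    simp [bernoulliReal, Measure.dirac_apply' _ (measurableSet_singleton (1:ℝ))]
  have hPQ : ∀ i, P ((Q0 i)⁻¹' (Set.Iic u)) = ENNReal.ofReal u := by
    intro i
    rw [← Measure.map_apply (hQm i) measurableSet_Iic, hQ i, unif,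
      Measure.restrict_apply measurableSet_Iic]
    have hIio : Set.Iic u ∩ Set.Ioo 0 1 = Set.Ioc 0 u := by
      ext x
      simp only [Set.mem_inter_iff, Set.mem_Iic, Set.mem_Ioo, Set.mem_Ioc]
      constructor
      · rintro ⟨h1, h2, h3⟩; exact ⟨h2, h1⟩
      · rintro ⟨h1, h2⟩; exact ⟨h2, h1, by linarith⟩
    rw [hIio, Real.volume_Ioc, sub_zero]
  have hBQindep : ∀ i, IndepFun (B i) (Q0 i) P := by
    intro i
    have hij : ((i, (0:Fin 2)) : Fin n × Fin 2) ≠ (i, 1) := by simp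
    exact hindep.indepFun hij
  have hPA : ∀ i, P (A i) = ENNReal.ofReal q := by
    intro i
    rw [hA]
    rw [(hBQindep i).measure_inter_preimage_eq_mul {1} (Set.Iic u)
      (measurableSet_singleton (1:ℝ)) measurableSet_Iic, hPB i, hPQ i,
      ← ENNReal.ofReal_mul hp0]
  -- independence of the indicators
  have hAindep : iIndepSet A P := by
    rw [iIndepSet_iff_meas_biInter hAmeas]
    intro s
    classical
    have key := hindep.measure_inter_preimage_eq_mul (s ×ˢ Finset.univ)
      (sets := fun pr => ![({1} : Set ℝ), Set.Iic u] pr.2) (fun pr _ => by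
        rcases pr with ⟨i, j⟩
        fin_cases j
        · exact measurableSet_singleton 1
        · exact measurableSet_Iic)
    have hL : (⋂ pr ∈ s ×ˢ (Finset.univ : Finset (Fin 2)),
        (fun qr : Fin n × Fin 2 => ![B qr.1, Q0 qr.1] qr.2) pr ⁻¹'
          ![({1} : Set ℝ), Set.Iic u] pr.2)
        = ⋂ i ∈ s, A i := by
      ext ω
      simp only [Set.mem_iInter, Finset.mem_product, Finset.mem_univ, and_true, Set.mem_preimage,
        Prod.forall, hA, Set.mem_inter_iff, Set.mem_singleton_iff, Set.mem_Iic]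
      constructor
      · intro h i hi
        exact ⟨h i 0 hi, h i 1 hi⟩
      · intro h i j hi
        fin_cases j
        · exact (h i hi).1
        · exact (h i hi).2
    have hR : (∏ pr ∈ s ×ˢ (Finset.univ : Finset (Fin 2)),
        P ((fun qr : Fin n × Fin 2 => ![B qr.1, Q0 qr.1] qr.2) pr ⁻¹'
          ![({1} : Set ℝ), Set.Iic u] pr.2))
        = ∏ i ∈ s, P (A i) := by
      rw [Finset.prod_product]
      refine Finset.prod_congr rfl fun i _ => ?_
      rw [Fin.prod_univ_two]
      have := ((hBQindep i).measure_inter_preimage_eq_mul {1} (Set.Iic u)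
        (measurableSet_singleton (1:ℝ)) measurableSet_Iic)
      simpa using this.symm
    rw [hL, hR] at key
    exact key
  have hXindep : iIndepFun X P :=
    hAindep.iIndepFun_indicator
  -- expectations
  have hEX : ∀ i, ∫ ω, X i ω ∂P = q := by
    intro i
    have h1 : ∫ ω, X i ω ∂P = (P (A i)).toReal := integral_indicator_one (hAmeas i)
    rw [h1, hPA i, ENNReal.toReal_ofReal hq0]
  have hFeq : ∀ ω, Ftil0 B Q0 u ω = (∑ i, X i ω) / n := by
    intro ω
    unfold Ftil0
    congr 1
    refine Finset.sum_congr rfl fun i _ => ?_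
    by_cases h : B i ω = 1 ∧ Q0 i ω ≤ u
    · have hm : ω ∈ A i := ⟨h.1, h.2⟩
      rw [if_pos h]
      exact (Set.indicator_of_mem hm (fun _ => (1:ℝ))).symm
    · have hm : ω ∉ A i := fun hm => h ⟨hm.1, hm.2⟩
      rw [if_neg h]
      exact (Set.indicator_of_notMem hm (fun _ => (1:ℝ))).symm
  have hEF : ∫ ω, Ftil0 B Q0 u ω ∂P = q := by
    have heq : (fun ω => Ftil0 B Q0 u ω) = fun ω => (∑ i, X i ω) / n := funext hFeq
    rw [heq, integral_div, integral_finset_sum _ (fun i _ => hXint i)]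
    simp only [hEX, Finset.sum_const, Finset.card_univ, Fintype.card_fin, nsmul_eq_mul]
    field_simp
  -- mgf of each X i at t = 1
  have hexpX : ∀ i, (fun ω => Real.exp (1 * X i ω))
      = fun ω => 1 + (Real.exp 1 - 1) * X i ω := by
    intro i
    funext ω
    by_cases h : ω ∈ A i
    · simp [hX, Set.indicator_of_mem h]
    · simp [hX, Set.indicator_of_notMem h]
  have hintexp : ∀ i, Integrable (fun ω => Real.exp (1 * X i ω)) P := by
    intro i
    rw [hexpX i]
    exact (integrable_const (1:ℝ)).add ((hXint i).const_mul _)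
  have hmgfX : ∀ i, mgf (X i) P 1 = 1 + (Real.exp 1 - 1) * q := by
    intro i
    unfold mgf
    rw [hexpX i, integral_add (integrable_const 1) ((hXint i).const_mul _),
      integral_const, integral_const_mul, hEX i]
    simp
  -- Chernoff
  set S : Ω → ℝ := ∑ i, X i with hS
  have hintS : Integrable (fun ω => Real.exp (1 * S ω)) P :=
    hXindep.integrable_exp_mul_sum hXmeas (fun i _ => hintexp i)
  set ε : ℝ := n * q + Real.sqrt n * (a * Real.sqrt (u * (1 - u))) with hε
  have chernoff := measure_ge_le_exp_mul_mgf (μ := P) (X := S) (t := 1) ε zero_le_one hintS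
  have hmgfS : mgf S P 1 = (1 + (Real.exp 1 - 1) * q) ^ n := by
    rw [hS, hXindep.mgf_sum hXmeas Finset.univ]
    simp [hmgfX]
  -- event inclusion
  have hsqrtpos : 0 < Real.sqrt n := Real.sqrt_pos.mpr hnpos
  have hsq : Real.sqrt n * Real.sqrt n = (n:ℝ) := Real.mul_self_sqrt hnpos.le
  have hsub : {ω | Real.sqrt n * (Ftil0 B Q0 u ω - ∫ ω', Ftil0 B Q0 u ω' ∂P) >
      a * Real.sqrt (u * (1 - u))} ⊆ {ω | ε ≤ S ω} := by
    intro ω hω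
    simp only [Set.mem_setOf_eq] at hω ⊢
    rw [hFeq ω, hEF] at hω
    have hSω : S ω = ∑ i, X i ω := by rw [hS]; simp
    rw [hSω]
    have hmul := mul_lt_mul_of_pos_left hω hsqrtpos
    have hid : Real.sqrt n * (Real.sqrt n * ((∑ i, X i ω) / n - q))
        = (∑ i, X i ω) - n * q := by
      rw [← mul_assoc, hsq]
      field_simp
    rw [hid] at hmul
    rw [hε]
    linarith
  -- numeric bound on the exponent
  have he2 : (2:ℝ) < Real.exp 1 := by
    have := Real.exp_one_gt_d9
    linarith
  set r : ℝ := Real.sqrt ((n:ℝ) * u) with hr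
  have hr0 : 0 ≤ r := Real.sqrt_nonneg _
  have hrsq : r * r = (n:ℝ) * u := Real.mul_self_sqrt (by positivity)
  have hrn : r ≤ Real.sqrt n := by
    rw [hr]
    apply Real.sqrt_le_sqrt
    nlinarith
  set K : ℝ := (n:ℝ) ^ (η / 2) with hK
  have hK0 : 0 < K := Real.rpow_pos_of_pos hnpos _
  have hrpow : K ≤ r := by
    have h1 : (n:ℝ) ^ η ≤ (n:ℝ) * u := by
      have h2 : (n:ℝ) * (n:ℝ) ^ (η - 1) ≤ (n:ℝ) * u :=
        mul_le_mul_of_nonneg_left hul hnpos.le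
      calc (n:ℝ) ^ η = (n:ℝ) ^ (1 + (η - 1)) := by ring_nf
        _ = (n:ℝ) ^ (1:ℝ) * (n:ℝ) ^ (η - 1) := Real.rpow_add hnpos _ _
        _ = (n:ℝ) * (n:ℝ) ^ (η - 1) := by rw [Real.rpow_one]
        _ ≤ (n:ℝ) * u := h2
    have h3 : K = Real.sqrt ((n:ℝ) ^ η) := by
      rw [hK, Real.sqrt_eq_rpow, ← Real.rpow_mul hnpos.le]
      ring_nf
    rw [h3, hr]
    exact Real.sqrt_le_sqrt h1
  have hsqrt2 : (0:ℝ) < Real.sqrt 2 := by positivity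
  have hs2sq : Real.sqrt 2 * Real.sqrt 2 = 2 := Real.mul_self_sqrt (by norm_num)
  set T : ℝ := Real.sqrt n * (a * Real.sqrt (u * (1 - u))) with hT
  -- lower bound on the deviation term: a*r/√2 ≤ T
  have htt : a * r / Real.sqrt 2 ≤ T := by
    have h1 : r ≤ Real.sqrt 2 * (Real.sqrt n * Real.sqrt (u * (1 - u))) := by
      have h2 : Real.sqrt 2 * (Real.sqrt n * Real.sqrt (u * (1 - u)))
          = Real.sqrt (2 * ((n:ℝ) * (u * (1 - u)))) := by
        rw [Real.sqrt_mul (by norm_num : (0:ℝ) ≤ 2), Real.sqrt_mul hnpos.le]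
      rw [h2, hr]
      apply Real.sqrt_le_sqrt
      nlinarith [hu0.le]
    rw [hT]
    rw [div_le_iff₀ hsqrt2]
    nlinarith [Real.sqrt_nonneg (u * (1 - u)), hsqrtpos.le, ha.le]
  -- key smallness condition: (e-2) * (n*q) ≤ a*r/(2*√2)
  have hcond2 : (Real.exp 1 - 2) * ((n:ℝ) * q) ≤ a * r / (2 * Real.sqrt 2) := by
    have h1 : (n:ℝ) * q = r * r * p := by rw [hrsq, hqdef]; ring
    have h3 : Real.sqrt n * p = (n:ℝ) ^ ((1:ℝ)/2 - β) := by
      rw [Real.sqrt_eq_rpow, hpdef, ← Real.rpow_add hnpos]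
      ring_nf
    have h4 : (Real.exp 1 - 2) * ((n:ℝ) ^ ((1:ℝ)/2 - β)) ≤ a / (2 * Real.sqrt 2) := by
      have hpos : 0 < (n:ℝ) ^ (β - 1/2) := Real.rpow_pos_of_pos hnpos _
      have hinv : (n:ℝ) ^ ((1:ℝ)/2 - β) = ((n:ℝ) ^ (β - 1/2))⁻¹ := by
        rw [← Real.rpow_neg hnpos.le]
        ring_nf
      rw [hinv]
      rw [div_le_iff₀ ha] at hcond
      rw [le_div_iff₀ (by positivity)]
      calc (Real.exp 1 - 2) * ((n:ℝ) ^ (β - 1/2))⁻¹ * (2 * Real.sqrt 2)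
          = (2 * Real.sqrt 2 * (Real.exp 1 - 2)) * ((n:ℝ) ^ (β - 1/2))⁻¹ := by ring
        _ ≤ ((n:ℝ) ^ (β - 1/2) * a) * ((n:ℝ) ^ (β - 1/2))⁻¹ := by
            apply mul_le_mul_of_nonneg_right hcond (by positivity)
        _ = a := by field_simp
    have h5 : (Real.exp 1 - 2) * ((n:ℝ) * q)
        ≤ ((Real.exp 1 - 2) * ((n:ℝ) ^ ((1:ℝ)/2 - β))) * r := by
      rw [h1, ← h3]
      nlinarith [mul_nonneg (mul_nonneg (sub_nonneg.mpr he2.le) (mul_nonneg hp0 hr0))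
        (sub_nonneg.mpr hrn)]
    calc (Real.exp 1 - 2) * ((n:ℝ) * q) ≤ ((Real.exp 1 - 2) * ((n:ℝ) ^ ((1:ℝ)/2 - β))) * r := h5
      _ ≤ (a / (2 * Real.sqrt 2)) * r := mul_le_mul_of_nonneg_right h4 hr0
      _ = a * r / (2 * Real.sqrt 2) := by ring
  -- the exponent bound
  have hexpbound : -ε + n * ((Real.exp 1 - 1) * q) ≤ -(a * (1/4) * K) := by
    have e1 : a * r / Real.sqrt 2 = 2 * (a * r / (2 * Real.sqrt 2)) := by
      field_simp
    have step1 : -ε + n * ((Real.exp 1 - 1) * q) ≤ -(a * r / (2 * Real.sqrt 2)) := by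
      rw [hε]
      have : -((n:ℝ) * q + T) + n * ((Real.exp 1 - 1) * q)
          = (Real.exp 1 - 2) * ((n:ℝ) * q) - T := by ring
      rw [this]
      linarith [htt, hcond2, e1.ge, e1.le]
    have step2 : a * K / (2 * Real.sqrt 2) ≤ a * r / (2 * Real.sqrt 2) := by
      have : a * K ≤ a * r := mul_le_mul_of_nonneg_left hrpow ha.le
      exact (div_le_div_iff_of_pos_right (by positivity)).mpr this
    have step3 : a * (1/4) * K ≤ a * K / (2 * Real.sqrt 2) := by
      rw [div_eq_mul_inv]
      have h24 : (2 * Real.sqrt 2) ≤ 4 := by nlinarith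
      have hinv : (4:ℝ)⁻¹ ≤ (2 * Real.sqrt 2)⁻¹ := by
        apply inv_anti₀ (by positivity) h24
      calc a * (1/4) * K = a * K * (4:ℝ)⁻¹ := by ring
        _ ≤ a * K * (2 * Real.sqrt 2)⁻¹ := by
            apply mul_le_mul_of_nonneg_left hinv (by positivity)
    linarith
  -- assemble the real bound
  have hreal : Real.exp (-1 * ε) * mgf S P 1 ≤ Real.exp (-(a * (1/4) * K)) := by
    rw [hmgfS]
    have hb0 : 0 ≤ 1 + (Real.exp 1 - 1) * q := by nlinarith
    have hble : 1 + (Real.exp 1 - 1) * q ≤ Real.exp ((Real.exp 1 - 1) * q) := by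
      have := Real.add_one_le_exp ((Real.exp 1 - 1) * q)
      linarith
    have hpow : (1 + (Real.exp 1 - 1) * q) ^ n ≤ Real.exp ((Real.exp 1 - 1) * q) ^ n :=
      pow_le_pow_left₀ hb0 hble n
    have hexpn : Real.exp ((Real.exp 1 - 1) * q) ^ n = Real.exp (n * ((Real.exp 1 - 1) * q)) :=
      (Real.exp_nat_mul _ n).symm
    calc Real.exp (-1 * ε) * (1 + (Real.exp 1 - 1) * q) ^ n
        ≤ Real.exp (-1 * ε) * Real.exp (n * ((Real.exp 1 - 1) * q)) := by
          apply mul_le_mul_of_nonneg_left _ (Real.exp_pos _).le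
          rw [← hexpn]; exact hpow
      _ = Real.exp (-1 * ε + n * ((Real.exp 1 - 1) * q)) := (Real.exp_add _ _).symm
      _ ≤ Real.exp (-(a * (1/4) * K)) := by
          apply Real.exp_le_exp.mpr
          rw [neg_one_mul]
          exact hexpbound
  -- conclude
  refine le_trans (measure_mono hsub) ?_
  rw [ENNReal.le_ofReal_iff_toReal_le (measure_ne_top P _) (by positivity)]
  refine le_trans chernoff ?_
  refine le_trans hreal ?_
  exact le_add_of_nonneg_right (Real.exp_pos _).le
end
end

section
/- Let β ∈ (1/2,1) and fix u ∈ (0,1). Under the coupling, for every a > 0 there exists n0 such that for all n ≥ n0: Pr( √n·(F̃^{(1)}(u) − E[F̃^{(1)}(u)]) > a·√(u(1−u)) ) ≤ exp(−(a/2)·√(n·u(1−u))) + exp(−n^{1/4}). -/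
open MeasureTheory ProbabilityTheory Filter

noncomputable section

/-- The thinned alternative empirical CDF normalized by `n`:
`F̃^{(1)}(u) = (1/n) Σ_{i ∈ I} 1(Q_i^{(1)} ≤ u)`, where `I = {i : B_i = 1}` and
`Q_i^{(1)} = V_i` for `i ∈ I`. -/
def Ftil1 {n : ℕ} {Ω : Type*} (B V : Fin n → Ω → ℝ) (u : ℝ) (ω : Ω) : ℝ :=
  (∑ i, if B i ω = 1 ∧ V i ω ≤ u then (1 : ℝ) else 0) / n

/-- concentration of the thinned alternative empirical process at a fixed
`u ∈ (0,1)`: for `β ∈ (1/2,1)` and `a > 0`, for all large `n`,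
`Pr(√n (F̃^{(1)}(u) − E F̃^{(1)}(u)) > a√(u(1−u))) ≤ e^{−(a/2)√(nu(1−u))} + e^{−n^{1/4}}`. -/
theorem alt_thinned_ecdf_concentration (β u a : ℝ)
    (hβ : β ∈ Set.Ioo (1/2 : ℝ) 1) (hu : u ∈ Set.Ioo (0 : ℝ) 1) (ha : 0 < a) :
    ∃ n0 : ℕ, ∀ n : ℕ, n0 ≤ n →
      ∀ (Ω : Type) (_ : MeasurableSpace Ω) (P : Measure Ω),
        IsProbabilityMeasure P →
        ∀ G : Fin n → Measure ℝ,
          (∀ i, IsProbabilityMeasure (G i)) →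
          (∀ i, G i (Set.Ioo (0 : ℝ) 1)ᶜ = 0) →
          ∀ B V : Fin n → Ω → ℝ,
            (∀ i, Measurable (B i)) → (∀ i, Measurable (V i)) →
            (∀ i, Measure.map (B i) P = bernoulliReal ((n : ℝ) ^ (-β))) →
            (∀ i, Measure.map (V i) P = G i) →
            iIndepFun
              (fun (p : Fin n × Fin 2) => ![B p.1, V p.1] p.2) P →
            P {ω | Real.sqrt n * (Ftil1 B V u ω - ∫ ω', Ftil1 B V u ω' ∂P) >
                a * Real.sqrt (u * (1 - u))} ≤
              ENNReal.ofReal (Real.exp (-(a / 2) * Real.sqrt ((n : ℝ) * u * (1 - u))) +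
                Real.exp (-(n : ℝ) ^ ((1 : ℝ) / 4))) := by
  obtain ⟨hβ1, hβ2⟩ := hβ
  obtain ⟨hu0, hu1⟩ := hu
  have hupos : 0 < u * (1 - u) := mul_pos hu0 (by linarith)
  have hsu : 0 < Real.sqrt (u * (1 - u)) := Real.sqrt_pos.mpr hupos
  have hE1 : (1 : ℝ) < Real.exp 1 := by
    have := Real.add_one_le_exp 1; linarith
  set δ : ℝ := a * Real.sqrt (u * (1 - u)) / (2 * (Real.exp 1 - 1)) with hδdef
  have hδpos : 0 < δ := div_pos (mul_pos ha hsu) (by linarith)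
  have htend : Tendsto (fun n : ℕ => (n : ℝ) ^ ((1 : ℝ)/2 - β)) atTop (nhds 0) := by
    have h := (tendsto_rpow_neg_atTop (by linarith : (0:ℝ) < β - 1/2)).comp
      tendsto_natCast_atTop_atTop
    simpa [Function.comp_def, neg_sub] using h
  have hev : ∀ᶠ n : ℕ in atTop, (n : ℝ) ^ ((1 : ℝ)/2 - β) < δ :=
    htend.eventually_lt_const hδpos
  obtain ⟨n1, hn1⟩ := eventually_atTop.mp hev
  refine ⟨max n1 1, fun n hn Ω mΩ P hP G hG hGsupp B V hBmeas hVmeas hBmap hVmap hindep => ?_⟩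
  have hn1' : n1 ≤ n := le_trans (le_max_left _ _) hn
  have hnge1 : 1 ≤ n := le_trans (le_max_right _ _) hn
  have hnpos : (0 : ℝ) < n := by exact_mod_cast hnge1
  have hsn : 0 < Real.sqrt n := Real.sqrt_pos.mpr hnpos
  set ε : ℝ := (n : ℝ) ^ (-β) with hεdef
  have hεpos : 0 < ε := Real.rpow_pos_of_pos hnpos _
  -- the sets and indicators
  set A : Fin n → Set Ω := fun i => {ω | B i ω = 1 ∧ V i ω ≤ u} with hAdef
  have hAeq : ∀ i, A i = (B i) ⁻¹' {1} ∩ (V i) ⁻¹' (Set.Iic u) := fun i => rfl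
  have hAmeas : ∀ i, MeasurableSet (A i) := fun i =>
    ((hBmeas i) (measurableSet_singleton 1)).inter ((hVmeas i) measurableSet_Iic)
  -- key independence computation
  set Tset : Fin 2 → Set ℝ := ![{1}, Set.Iic u] with hTdef
  have hTmeas : ∀ j, MeasurableSet (Tset j) := by
    intro j; fin_cases j
    · exact measurableSet_singleton 1
    · exact measurableSet_Iic
  have key : ∀ s : Finset (Fin n), P (⋂ i ∈ s, A i) =
      ∏ i ∈ s, (P ((B i) ⁻¹' {1}) * P ((V i) ⁻¹' (Set.Iic u))) := by
    intro s
    have h := hindep.meas_biInter (S := s ×ˢ Finset.univ)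
      (s := fun p => (![B p.1, V p.1] p.2) ⁻¹' (Tset p.2)) ?_
    · have hset : (⋂ p ∈ s ×ˢ (Finset.univ : Finset (Fin 2)),
          (![B p.1, V p.1] p.2) ⁻¹' (Tset p.2)) = ⋂ i ∈ s, A i := by
        ext ω
        simp only [Set.mem_iInter, Finset.mem_product, Finset.mem_univ, and_true,
          Set.mem_preimage, hAdef, Set.mem_setOf_eq, Prod.forall]
        constructor
        · intro h i hi
          have h0 := h i 0 hi
          have h1 := h i 1 hi
          simp [hTdef] at h0 h1
          exact ⟨h0, h1⟩
        · intro h i j hi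
          fin_cases j
          · simpa [hTdef] using (h i hi).1
          · simpa [hTdef] using (h i hi).2
      rw [hset] at h
      rw [h, Finset.prod_product]
      refine Finset.prod_congr rfl fun i _ => ?_
      rw [Fin.prod_univ_two]
      simp [hTdef]
    · rintro ⟨i, j⟩ -
      exact ⟨Tset j, hTmeas j, rfl⟩
  have hAi : ∀ i, P (A i) = P ((B i) ⁻¹' {1}) * P ((V i) ⁻¹' (Set.Iic u)) := by
    intro i; simpa using key {i}
  have hAset : iIndepSet A P := by
    rw [iIndepSet_iff_meas_biInter hAmeas]
    intro s
    rw [key s]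
    exact (Finset.prod_congr rfl fun i _ => (hAi i).symm)
  set X : Fin n → Ω → ℝ := fun i => (A i).indicator (fun _ => (1:ℝ)) with hXdef
  have hXindep : iIndepFun X P :=
    hAset.iIndepFun_indicator
  have hXmeas : ∀ i, Measurable (X i) := fun i =>
    measurable_const.indicator (hAmeas i)
  have hX01 : ∀ i ω, X i ω = if B i ω = 1 ∧ V i ω ≤ u then (1:ℝ) else 0 := by
    intro i ω
    simp [hXdef, Set.indicator_apply, hAdef, Set.mem_setOf_eq]
  have hXnonneg : ∀ i ω, 0 ≤ X i ω := by
    intro i ω; rw [hX01]; positivity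
  have hXle1 : ∀ i ω, X i ω ≤ 1 := by
    intro i ω; rw [hX01]; split <;> norm_num
  set S : Ω → ℝ := fun ω => ∑ i, X i ω with hSdef
  have hSsum : S = ∑ i, X i := by
    funext ω; simp [hSdef]
  have hSmeas : Measurable S := by
    apply Finset.measurable_sum
    exact fun i _ => hXmeas i
  have hSnonneg : ∀ ω, 0 ≤ S ω := fun ω =>
    Finset.sum_nonneg fun i _ => hXnonneg i ω
  have hSle : ∀ ω, S ω ≤ n := by
    intro ω
    calc S ω ≤ ∑ _i : Fin n, (1:ℝ) := Finset.sum_le_sum fun i _ => hXle1 i ω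
    _ = n := by simp
  have hF : ∀ ω, Ftil1 B V u ω = S ω / n := by
    intro ω
    simp only [Ftil1, hSdef]
    congr 1
    exact Finset.sum_congr rfl fun i _ => (hX01 i ω).symm
  have hEnonneg : 0 ≤ ∫ ω', Ftil1 B V u ω' ∂P := by
    apply integral_nonneg
    intro ω
    rw [hF]
    exact div_nonneg (hSnonneg ω) hnpos.le
  set c : ℝ := a * Real.sqrt (u * (1 - u)) with hcdef
  have hcpos : 0 < c := mul_pos ha hsu
  set t : ℝ := c * Real.sqrt n with htdef
  -- event inclusion
  have hsubset : {ω | Real.sqrt n * (Ftil1 B V u ω - ∫ ω', Ftil1 B V u ω' ∂P) > c}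
      ⊆ {ω | t ≤ S ω} := by
    intro ω hω
    simp only [Set.mem_setOf_eq] at hω ⊢
    have h1 : c < Real.sqrt n * (S ω / n) := by
      calc c < Real.sqrt n * (Ftil1 B V u ω - ∫ ω', Ftil1 B V u ω' ∂P) := hω
      _ ≤ Real.sqrt n * Ftil1 B V u ω :=
          mul_le_mul_of_nonneg_left (sub_le_self _ hEnonneg) (Real.sqrt_nonneg _)
      _ = Real.sqrt n * (S ω / n) := by rw [hF]
    have h2 := mul_lt_mul_of_pos_right h1 hsn
    have h3 : Real.sqrt n * (S ω / n) * Real.sqrt n = S ω := by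
      have hss : Real.sqrt n * Real.sqrt n = n := Real.mul_self_sqrt hnpos.le
      calc Real.sqrt n * (S ω / n) * Real.sqrt n
          = (Real.sqrt n * Real.sqrt n) * (S ω / n) := by ring
        _ = (n : ℝ) * (S ω / n) := by rw [hss]
        _ = S ω := by field_simp
    rw [h3] at h2
    exact h2.le
  -- integrability of exp(1 * S)
  have hint : Integrable (fun ω => Real.exp (1 * S ω)) P := by
    apply Integrable.mono' (integrable_const (Real.exp n))
    · exact ((hSmeas.const_mul 1).exp.aestronglyMeasurable)
    · filter_upwards with ω
      rw [Real.norm_eq_abs, abs_of_nonneg (Real.exp_pos _).le]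
      apply Real.exp_le_exp.2
      simpa using hSle ω
  -- Markov / Chernoff
  have markov := measure_ge_le_exp_mul_mgf (μ := P) (X := S) (t := 1) t zero_le_one hint
  have hmgfsum : mgf S P 1 = ∏ i, mgf (X i) P 1 := by
    rw [hSsum]
    exact hXindep.mgf_sum hXmeas Finset.univ
  -- P(B_i = 1) = ε
  have hpB : ∀ i, P ((B i) ⁻¹' {1}) = ENNReal.ofReal ε := by
    intro i
    rw [← Measure.map_apply (hBmeas i) (measurableSet_singleton 1), hBmap i]
    simp only [bernoulliReal, Measure.coe_add, Measure.coe_smul, Pi.add_apply, Pi.smul_apply,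
      Measure.dirac_apply' _ (measurableSet_singleton (1:ℝ)), smul_eq_mul]
    rw [Set.indicator_apply, Set.indicator_apply]
    norm_num
  have hpA : ∀ i, (P (A i)).toReal ≤ ε := by
    intro i
    have hsub : A i ⊆ (B i) ⁻¹' {1} := fun ω hω => hω.1
    have h1 : P (A i) ≤ ENNReal.ofReal ε := (hpB i) ▸ measure_mono hsub
    have h2 := ENNReal.toReal_mono ENNReal.ofReal_ne_top h1
    rwa [ENNReal.toReal_ofReal hεpos.le] at h2
  have hintX : ∀ i, Integrable (X i) P := fun i =>
    (integrable_const (1:ℝ)).indicator (hAmeas i)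
  have hmgfXi : ∀ i, mgf (X i) P 1 = 1 + (Real.exp 1 - 1) * (P (A i)).toReal := by
    intro i
    have hfun : (fun ω => Real.exp (1 * X i ω))
        = fun ω => 1 + (Real.exp 1 - 1) * X i ω := by
      funext ω
      by_cases h : ω ∈ A i
      · simp [hXdef, Set.indicator_of_mem h]
      · simp [hXdef, Set.indicator_of_notMem h]
    rw [mgf, hfun]
    rw [integral_add (integrable_const 1) ((hintX i).const_mul _)]
    rw [integral_const, integral_const_mul]
    have hX : ∫ ω, X i ω ∂P = (P (A i)).toReal := by
      rw [hXdef]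
      simp only []
      rw [integral_indicator_const (1:ℝ) (hAmeas i)]
      simp [Measure.real]
    rw [hX]
    simp [hP.measure_univ]
  have hmgfbound : ∀ i, mgf (X i) P 1 ≤ Real.exp ((Real.exp 1 - 1) * ε) := by
    intro i
    rw [hmgfXi i]
    have h1 : (Real.exp 1 - 1) * (P (A i)).toReal ≤ (Real.exp 1 - 1) * ε :=
      mul_le_mul_of_nonneg_left (hpA i) (by linarith)
    calc 1 + (Real.exp 1 - 1) * (P (A i)).toReal
        ≤ 1 + (Real.exp 1 - 1) * ε := by linarith
      _ ≤ Real.exp ((Real.exp 1 - 1) * ε) := by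
          have := Real.add_one_le_exp ((Real.exp 1 - 1) * ε); linarith
  have hmgfS : mgf S P 1 ≤ Real.exp ((n : ℝ) * ((Real.exp 1 - 1) * ε)) := by
    rw [hmgfsum]
    calc ∏ i, mgf (X i) P 1 ≤ ∏ _i : Fin n, Real.exp ((Real.exp 1 - 1) * ε) :=
          Finset.prod_le_prod (fun i _ => mgf_nonneg) (fun i _ => hmgfbound i)
      _ = Real.exp ((Real.exp 1 - 1) * ε) ^ n := by simp
      _ = Real.exp ((n : ℝ) * ((Real.exp 1 - 1) * ε)) := (Real.exp_nat_mul _ n).symm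
  -- the arithmetic: n * (e-1) * ε ≤ t/2
  have harith : (n : ℝ) * ((Real.exp 1 - 1) * ε) ≤ t / 2 := by
    have h1 : (n : ℝ) * ε = (n : ℝ) ^ ((1:ℝ) - β) := by
      rw [hεdef, show (1:ℝ) - β = 1 + (-β) by ring, Real.rpow_add hnpos, Real.rpow_one]
    have h2 : (n : ℝ) ^ ((1:ℝ) - β) = Real.sqrt n * (n : ℝ) ^ ((1:ℝ)/2 - β) := by
      rw [show (1:ℝ) - β = 1/2 + (1/2 - β) by ring, Real.rpow_add hnpos, Real.sqrt_eq_rpow]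
    have h3 : (n : ℝ) ^ ((1:ℝ)/2 - β) ≤ δ := (hn1 n hn1').le
    have h4 : (n : ℝ) * ε ≤ Real.sqrt n * δ := by
      rw [h1, h2]
      exact mul_le_mul_of_nonneg_left h3 (Real.sqrt_nonneg _)
    have h5 : (Real.exp 1 - 1) * δ = c / 2 := by
      have he : Real.exp 1 - 1 ≠ 0 := by linarith
      rw [hδdef, hcdef]
      field_simp
    calc (n : ℝ) * ((Real.exp 1 - 1) * ε) = (Real.exp 1 - 1) * ((n:ℝ) * ε) := by ring
      _ ≤ (Real.exp 1 - 1) * (Real.sqrt n * δ) :=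
          mul_le_mul_of_nonneg_left h4 (by linarith)
      _ = Real.sqrt n * ((Real.exp 1 - 1) * δ) := by ring
      _ = Real.sqrt n * (c / 2) := by rw [h5]
      _ = t / 2 := by rw [htdef]; ring
  -- combine
  have hfinal : (P {ω | t ≤ S ω}).toReal
      ≤ Real.exp (-(a / 2) * Real.sqrt ((n : ℝ) * u * (1 - u))) := by
    have hsqrt : Real.sqrt ((n : ℝ) * u * (1 - u)) = Real.sqrt n * Real.sqrt (u * (1-u)) := by
      rw [mul_assoc, Real.sqrt_mul hnpos.le]
    calc (P {ω | t ≤ S ω}).toReal ≤ Real.exp (-1 * t) * mgf S P 1 := markov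
      _ ≤ Real.exp (-1 * t) * Real.exp ((n : ℝ) * ((Real.exp 1 - 1) * ε)) :=
          mul_le_mul_of_nonneg_left hmgfS (Real.exp_pos _).le
      _ = Real.exp ((n : ℝ) * ((Real.exp 1 - 1) * ε) - t) := by
          rw [← Real.exp_add]; ring_nf
      _ ≤ Real.exp (-(t/2)) := Real.exp_le_exp.2 (by linarith)
      _ = Real.exp (-(a / 2) * Real.sqrt ((n : ℝ) * u * (1 - u))) := by
          rw [hsqrt, htdef, hcdef]; ring_nf
  calc P {ω | Real.sqrt n * (Ftil1 B V u ω - ∫ ω', Ftil1 B V u ω' ∂P) > c}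
      ≤ P {ω | t ≤ S ω} := measure_mono hsubset
    _ ≤ ENNReal.ofReal (Real.exp (-(a / 2) * Real.sqrt ((n : ℝ) * u * (1 - u)))) := by
        rw [ENNReal.le_ofReal_iff_toReal_le (measure_ne_top P _) (Real.exp_pos _).le]
        exact hfinal
    _ ≤ ENNReal.ofReal (Real.exp (-(a / 2) * Real.sqrt ((n : ℝ) * u * (1 - u))) +
          Real.exp (-(n : ℝ) ^ ((1 : ℝ) / 4))) :=
        ENNReal.ofReal_le_ofReal (le_add_of_nonneg_right (Real.exp_pos _).le)
end
end
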